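/- Suppose |r(s,a,z₁) − r(s,a,z₂)| ≤ C₁·‖z₁ − z₂‖₁ and Σ_{s'} |P(s'|s,a,z₁) − P(s'|s,a,z₂)| ≤ C₂·‖z₁ − z₂‖₁ for all (s,a), rewards satisfy 0 ≤ r ≤ 1, and Q*_{z_i} is the fixed point of F_{z_i}(Q)(s,a) = r(s,a,z_i) + γ Σ_{s'} P(s'|s,a,z_i) max_b Q(s',b) with 0 < γ < 1 and ‖Q*_{z_i}‖_∞ ≤ 1/(1−γ). Then ‖Q*_{z₁} − Q*_{z₂}‖_∞ ≤ D·‖z₁ − z₂‖₁ where D = C₁/(1−γ) + γC₂/(1−γ)². -/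

import Mathlib

theorem stmt_3 {S A : Type*} [Fintype S] [Fintype A] [Nonempty S] [Nonempty A]
    (r : (S → ℝ) → S × A → ℝ) (P : (S → ℝ) → S × A → S → ℝ)
    (γ C₁ C₂ : ℝ) (hγ0 : 0 < γ) (hγ1 : γ < 1)
    (z₁ z₂ : S → ℝ)
    (hz₁ : (∀ s, 0 ≤ z₁ s) ∧ ∑ s, z₁ s = 1) (hz₂ : (∀ s, 0 ≤ z₂ s) ∧ ∑ s, z₂ s = 1)
    (hr01 : ∀ z sa, 0 ≤ r z sa ∧ r z sa ≤ 1)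
    (hP0 : ∀ z sa s', 0 ≤ P z sa s') (hP1 : ∀ z sa, ∑ s', P z sa s' = 1)
    (hrLip : ∀ sa, |r z₁ sa - r z₂ sa| ≤ C₁ * ∑ s, |z₁ s - z₂ s|)
    (hPLip : ∀ sa, (∑ s', |P z₁ sa s' - P z₂ sa s'|) ≤ C₂ * ∑ s, |z₁ s - z₂ s|)
    (Q₁ Q₂ : S × A → ℝ)
    (hfix₁ : ∀ sa, Q₁ sa =
      r z₁ sa + γ * ∑ s', P z₁ sa s' *
        Finset.univ.sup' Finset.univ_nonempty (fun b => Q₁ (s', b)))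
    (hfix₂ : ∀ sa, Q₂ sa =
      r z₂ sa + γ * ∑ s', P z₂ sa s' *
        Finset.univ.sup' Finset.univ_nonempty (fun b => Q₂ (s', b)))
    (hbd₁ : ∀ sa, |Q₁ sa| ≤ 1 / (1 - γ)) (hbd₂ : ∀ sa, |Q₂ sa| ≤ 1 / (1 - γ)) :
    ∀ sa, |Q₁ sa - Q₂ sa| ≤
      (C₁ / (1 - γ) + γ * C₂ / (1 - γ) ^ 2) * ∑ s, |z₁ s - z₂ s| := by
  classical
  set ε := ∑ s, |z₁ s - z₂ s| with hεdef
  have hε : 0 ≤ ε := Finset.sum_nonneg fun s _ => abs_nonneg _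
  have h1γ : 0 < 1 - γ := by linarith
  set M₁ : S → ℝ := fun s' => Finset.univ.sup' Finset.univ_nonempty (fun b => Q₁ (s', b)) with hM₁
  set M₂ : S → ℝ := fun s' => Finset.univ.sup' Finset.univ_nonempty (fun b => Q₂ (s', b)) with hM₂
  set Δ : ℝ := (Finset.univ : Finset (S × A)).sup' Finset.univ_nonempty
      (fun sa => |Q₁ sa - Q₂ sa|) with hΔdef
  have hΔ0 : 0 ≤ Δ := by
    rw [hΔdef]
    exact le_trans (abs_nonneg (Q₁ (Classical.arbitrary (S × A)) - Q₂ (Classical.arbitrary (S × A))))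
      (Finset.le_sup' (fun sa => |Q₁ sa - Q₂ sa|) (Finset.mem_univ (Classical.arbitrary (S × A))))
  have hM₁bd : ∀ s', |M₁ s'| ≤ 1 / (1 - γ) := by
    intro s'
    simp only [hM₁]
    rw [abs_le]
    constructor
    · have h1 : Q₁ (s', Classical.arbitrary A) ≤
          Finset.univ.sup' Finset.univ_nonempty (fun b => Q₁ (s', b)) :=
        Finset.le_sup' (fun b => Q₁ (s', b)) (Finset.mem_univ _)
      have h2 := (abs_le.1 (hbd₁ (s', Classical.arbitrary A))).1
      linarith
    · exact Finset.sup'_le _ _ fun b _ => (abs_le.1 (hbd₁ (s', b))).2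
  have hMdiff : ∀ s', |M₁ s' - M₂ s'| ≤ Δ := by
    intro s'
    simp only [hM₁, hM₂, hΔdef]
    rw [abs_sub_le_iff]
    constructor
    · rw [sub_le_iff_le_add]
      apply Finset.sup'_le
      intro b _
      have h1 : |Q₁ (s', b) - Q₂ (s', b)| ≤ (Finset.univ : Finset (S × A)).sup'
          Finset.univ_nonempty (fun sa => |Q₁ sa - Q₂ sa|) :=
        Finset.le_sup' (fun sa => |Q₁ sa - Q₂ sa|) (Finset.mem_univ (s', b))
      have h2 : Q₂ (s', b) ≤ Finset.univ.sup' Finset.univ_nonempty (fun b => Q₂ (s', b)) :=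
        Finset.le_sup' (fun b => Q₂ (s', b)) (Finset.mem_univ b)
      have := (abs_le.1 h1).2
      linarith
    · rw [sub_le_iff_le_add]
      apply Finset.sup'_le
      intro b _
      have h1 : |Q₁ (s', b) - Q₂ (s', b)| ≤ (Finset.univ : Finset (S × A)).sup'
          Finset.univ_nonempty (fun sa => |Q₁ sa - Q₂ sa|) :=
        Finset.le_sup' (fun sa => |Q₁ sa - Q₂ sa|) (Finset.mem_univ (s', b))
      have h2 : Q₁ (s', b) ≤ Finset.univ.sup' Finset.univ_nonempty (fun b => Q₁ (s', b)) :=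
        Finset.le_sup' (fun b => Q₁ (s', b)) (Finset.mem_univ b)
      have := (abs_le.1 h1).1
      linarith
  have key : ∀ sa, |Q₁ sa - Q₂ sa| ≤ C₁ * ε + γ * (C₂ * ε * (1 / (1 - γ)) + Δ) := by
    intro sa
    have heq : Q₁ sa - Q₂ sa = (r z₁ sa - r z₂ sa)
        + γ * (∑ s', ((P z₁ sa s' - P z₂ sa s') * M₁ s'
            + P z₂ sa s' * (M₁ s' - M₂ s'))) := by
      have hpt : ∀ s' ∈ (Finset.univ : Finset S),
          (P z₁ sa s' - P z₂ sa s') * M₁ s' + P z₂ sa s' * (M₁ s' - M₂ s')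
            = P z₁ sa s' * M₁ s' - P z₂ sa s' * M₂ s' := fun s' _ => by ring
      rw [Finset.sum_congr rfl hpt, Finset.sum_sub_distrib, hfix₁ sa, hfix₂ sa]
      ring
    have hsum : |∑ s', ((P z₁ sa s' - P z₂ sa s') * M₁ s'
        + P z₂ sa s' * (M₁ s' - M₂ s'))| ≤ C₂ * ε * (1 / (1 - γ)) + Δ := by
      calc |∑ s', ((P z₁ sa s' - P z₂ sa s') * M₁ s' + P z₂ sa s' * (M₁ s' - M₂ s'))|
          ≤ ∑ s', |(P z₁ sa s' - P z₂ sa s') * M₁ s' + P z₂ sa s' * (M₁ s' - M₂ s')| :=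
            Finset.abs_sum_le_sum_abs _ _
        _ ≤ ∑ s', (|P z₁ sa s' - P z₂ sa s'| * (1 / (1 - γ)) + P z₂ sa s' * Δ) := by
            apply Finset.sum_le_sum
            intro s' _
            calc |(P z₁ sa s' - P z₂ sa s') * M₁ s' + P z₂ sa s' * (M₁ s' - M₂ s')|
                ≤ |(P z₁ sa s' - P z₂ sa s') * M₁ s'| + |P z₂ sa s' * (M₁ s' - M₂ s')| :=
                  abs_add_le _ _
              _ ≤ |P z₁ sa s' - P z₂ sa s'| * (1 / (1 - γ)) + P z₂ sa s' * Δ := by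
                  rw [abs_mul, abs_mul, abs_of_nonneg (hP0 z₂ sa s')]
                  exact add_le_add
                    (mul_le_mul_of_nonneg_left (hM₁bd s') (abs_nonneg _))
                    (mul_le_mul_of_nonneg_left (hMdiff s') (hP0 z₂ sa s'))
        _ = (∑ s', |P z₁ sa s' - P z₂ sa s'|) * (1 / (1 - γ)) + (∑ s', P z₂ sa s') * Δ := by
            rw [Finset.sum_add_distrib, Finset.sum_mul, Finset.sum_mul]
        _ ≤ C₂ * ε * (1 / (1 - γ)) + Δ := by
            rw [hP1 z₂ sa, one_mul]
            exact add_le_add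
              (mul_le_mul_of_nonneg_right (hPLip sa) (by positivity)) (le_refl Δ)
    calc |Q₁ sa - Q₂ sa|
        ≤ |r z₁ sa - r z₂ sa| + γ * |∑ s', ((P z₁ sa s' - P z₂ sa s') * M₁ s'
            + P z₂ sa s' * (M₁ s' - M₂ s'))| := by
          rw [heq]
          refine le_trans (abs_add_le _ _) ?_
          rw [abs_mul, abs_of_pos hγ0]
      _ ≤ C₁ * ε + γ * (C₂ * ε * (1 / (1 - γ)) + Δ) :=
          add_le_add (hrLip sa) (mul_le_mul_of_nonneg_left hsum (le_of_lt hγ0))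
  have hΔle : Δ ≤ C₁ * ε + γ * (C₂ * ε * (1 / (1 - γ)) + Δ) :=
    Finset.sup'_le _ _ fun sa _ => key sa
  have hT : Δ ≤ (C₁ / (1 - γ) + γ * C₂ / (1 - γ) ^ 2) * ε := by
    rw [← mul_le_mul_iff_right₀ h1γ]
    have hEq : (1 - γ) * ((C₁ / (1 - γ) + γ * C₂ / (1 - γ) ^ 2) * ε)
        = C₁ * ε + γ * (C₂ * ε * (1 / (1 - γ))) := by
      field_simp
    rw [hEq]
    nlinarith [hΔle]
  intro sa
  exact le_trans (Finset.le_sup' (fun sa => |Q₁ sa - Q₂ sa|) (Finset.mem_univ sa)) hT
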